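/- arXiv:1609.00463 — 2 statements merged into one kernel-verified Lean document; each statement's English description precedes it below -/
import Mathlib

section
/- For any fixed real numbers Δt and ΔW (with ΔW interpreted as a fixed realization of the noise increment), the map (q_k, p_k) ↦ (q_{k+1}, p_{k+1}) defined implicitly by the stochastic midpoint scheme q_{k+1} = q_k + ∂H/∂p(Q, P)Δt + ∂h/∂p(Q, P)ΔW, p_{k+1} = p_k − ∂H/∂q(Q, P)Δt − ∂h/∂q(Q, P)ΔW, with Q = (q_k+q_{k+1})/2, P = (p_k+p_{k+1})/2, is symplectic wherever it is well defined and differentiable: its Jacobian matrix M satisfies Mᵀ J M = J, where J is the standard symplectic matrix on ℝ²ᴺ. -/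
open Matrix

/-- The standard basis of `ℝᴺ × ℝᴺ` indexed by `Fin N ⊕ Fin N`. -/
noncomputable def stdBasis4 (N : ℕ) : (Fin N ⊕ Fin N) → (Fin N → ℝ) × (Fin N → ℝ) :=
  Sum.elim (fun k => (Pi.single k 1, 0)) (fun k => (0, Pi.single k 1))

/-- The Jacobian matrix of a map `F : ℝᴺ × ℝᴺ → ℝᴺ × ℝᴺ` at a point `x`. -/
noncomputable def jacobian4 (N : ℕ)
    (F : (Fin N → ℝ) × (Fin N → ℝ) → (Fin N → ℝ) × (Fin N → ℝ))
    (x : (Fin N → ℝ) × (Fin N → ℝ)) :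
    Matrix (Fin N ⊕ Fin N) (Fin N ⊕ Fin N) ℝ :=
  Matrix.of fun i j =>
    Sum.elim (fun k => (fderiv ℝ F x (stdBasis4 N j)).1 k)
             (fun k => (fderiv ℝ F x (stdBasis4 N j)).2 k) i

/-- The canonical symplectic matrix `J = [[0, I], [−I, 0]]` on `ℝ²ᴺ`. -/
noncomputable def sympJ4 (N : ℕ) : Matrix (Fin N ⊕ Fin N) (Fin N ⊕ Fin N) ℝ :=
  Matrix.fromBlocks 0 1 (-1) 0

namespace Stmt4Aux

variable {N : ℕ}

/-- The coordinates of a vector of `ℝᴺ × ℝᴺ` w.r.t. the standard basis. -/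
def coord (i : Fin N ⊕ Fin N) (v : (Fin N → ℝ) × (Fin N → ℝ)) : ℝ :=
  Sum.elim (fun k => v.1 k) (fun k => v.2 k) i

lemma coord_add (i : Fin N ⊕ Fin N) (v w : (Fin N → ℝ) × (Fin N → ℝ)) :
    coord i (v + w) = coord i v + coord i w := by
  cases i <;> rfl

lemma coord_std (i j : Fin N ⊕ Fin N) :
    coord i (stdBasis4 N j) = (1 : Matrix (Fin N ⊕ Fin N) (Fin N ⊕ Fin N) ℝ) i j := by
  cases i <;> cases j <;>
    simp [coord, stdBasis4, Matrix.one_apply, Pi.single_apply, eq_comm]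

lemma pi_expand (f : Fin N → ℝ) : ∑ k, f k • (Pi.single k 1 : Fin N → ℝ) = f := by
  have : ∀ k : Fin N, f k • (Pi.single k 1 : Fin N → ℝ) = Pi.single k (f k) := by
    intro k; rw [← Pi.single_smul, smul_eq_mul, mul_one]
  simp only [this, Finset.univ_sum_single]

lemma sum_coord_smul (v : (Fin N → ℝ) × (Fin N → ℝ)) :
    ∑ l, coord l v • stdBasis4 N l = v := by
  rw [Fintype.sum_sum_type]
  refine Prod.ext ?_ ?_
  · simp only [Prod.fst_sum, Prod.fst_add, Prod.smul_fst]
    simp [stdBasis4, coord, pi_expand]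
  · simp only [Prod.snd_sum, Prod.snd_add, Prod.smul_snd]
    simp [stdBasis4, coord, pi_expand]

lemma sympJ4_transpose (N : ℕ) : (sympJ4 N)ᵀ = -sympJ4 N := by
  rw [sympJ4, Matrix.fromBlocks_transpose]
  have : -(Matrix.fromBlocks 0 1 (-1) 0 : Matrix (Fin N ⊕ Fin N) (Fin N ⊕ Fin N) ℝ)
      = Matrix.fromBlocks (-0) (-1) (-(-1)) (-0) := by
    rw [Matrix.fromBlocks_neg]
  rw [this]
  simp

lemma sympJ4_sq (N : ℕ) : sympJ4 N * sympJ4 N = -1 := by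
  rw [sympJ4, Matrix.fromBlocks_multiply]
  have : -(1 : Matrix (Fin N ⊕ Fin N) (Fin N ⊕ Fin N) ℝ)
      = Matrix.fromBlocks (-1) (-0) (-0) (-1) := by
    rw [← Matrix.fromBlocks_one, Matrix.fromBlocks_neg]
  rw [this]
  simp

/-- The key matrix-algebra fact: a Cayley-type relation implies symplecticity. -/
lemma symplectic_algebra {n : Type*} [Fintype n] [DecidableEq n]
    (J S M : Matrix n n ℝ) (hJT : Jᵀ = -J) (hJJ : J * J = -1) (hST : Sᵀ = S)
    (hM : M = 1 + (2⁻¹ : ℝ) • (J * S * (1 + M))) : Mᵀ * J * M = J := by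
  set t : ℝ := 2⁻¹ with ht
  set c := J * S with hc
  have hM' : M = 1 + t • c + t • (c * M) := by
    conv_lhs => rw [hM]
    rw [mul_add, mul_one, smul_add, ← add_assoc]
  have hAM : (1 - t • c) * M = 1 + t • c := by
    have h2 : M - t • (c * M) = 1 + t • c := by
      rw [sub_eq_iff_eq_add]; exact hM'
    calc (1 - t • c) * M = M - t • (c * M) := by
          rw [sub_mul, one_mul, Matrix.smul_mul]
      _ = 1 + t • c := h2
  have hBA : (1 + t • c) * (1 - t • c) = (1 - t • c) * (1 + t • c) := by
    simp only [mul_sub, sub_mul, mul_add, add_mul, mul_one, one_mul]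
    abel
  have hA'A : (1 - t • c) * (t • (M + 1)) = 1 := by
    rw [Matrix.mul_smul, mul_add, mul_one, hAM]
    have h4 : (1 + t • c) + (1 - t • c) = (2 : ℝ) • (1 : Matrix n n ℝ) := by
      rw [two_smul]; abel
    rw [h4, smul_smul]; norm_num
  have hAA' : (t • (M + 1)) * (1 - t • c) = 1 := mul_eq_one_comm.mp hA'A
  have hMrep : M = (t • (M + 1)) * (1 + t • c) := by
    conv_lhs => rw [← one_mul M, ← hAA', Matrix.mul_assoc, hAM]
  have hMA : M * (1 - t • c) = 1 + t • c := by
    rw [hMrep, Matrix.mul_assoc, hBA, ← Matrix.mul_assoc, hAA', one_mul]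
  have hAT : (1 - t • c)ᵀ * J = J * (1 + t • c) := by
    rw [hc, Matrix.transpose_sub, Matrix.transpose_smul, Matrix.transpose_one,
      Matrix.transpose_mul, hST, hJT, Matrix.mul_neg, smul_neg, sub_neg_eq_add,
      add_mul, one_mul, Matrix.smul_mul, Matrix.mul_assoc S J J, hJJ, mul_neg_one,
      mul_add, mul_one, Matrix.mul_smul, ← Matrix.mul_assoc, hJJ, neg_one_mul,
      smul_neg]
  have hBT : (1 + t • c)ᵀ * J = J * (1 - t • c) := by
    rw [hc, Matrix.transpose_add, Matrix.transpose_smul, Matrix.transpose_one,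
      Matrix.transpose_mul, hST, hJT, Matrix.mul_neg, smul_neg,
      add_mul, one_mul, Matrix.neg_mul, Matrix.smul_mul, Matrix.mul_assoc S J J, hJJ, mul_neg_one,
      mul_sub, mul_one, Matrix.mul_smul, ← Matrix.mul_assoc, hJJ, neg_one_mul,
      smul_neg]
    abel
  have h1t : (1 - t • c)ᵀ * Mᵀ = (1 + t • c)ᵀ := by
    rw [← Matrix.transpose_mul, hMA]
  have key : (1 - t • c)ᵀ * (Mᵀ * J * M) * (1 - t • c) = (1 - t • c)ᵀ * J * (1 - t • c) := by
    calc (1 - t • c)ᵀ * (Mᵀ * J * M) * (1 - t • c)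
        = ((1 - t • c)ᵀ * Mᵀ) * J * (M * (1 - t • c)) := by
          simp only [Matrix.mul_assoc]
      _ = (1 + t • c)ᵀ * J * (1 + t • c) := by rw [h1t, hMA]
      _ = J * ((1 - t • c) * (1 + t • c)) := by rw [hBT, Matrix.mul_assoc]
      _ = J * ((1 + t • c) * (1 - t • c)) := by rw [hBA]
      _ = (J * (1 + t • c)) * (1 - t • c) := by rw [Matrix.mul_assoc]
      _ = (1 - t • c)ᵀ * J * (1 - t • c) := by rw [← hAT]
  have h3 : (t • (M + 1))ᵀ * (1 - t • c)ᵀ = 1 := by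
    rw [← Matrix.transpose_mul, hA'A, Matrix.transpose_one]
  calc Mᵀ * J * M
      = ((t • (M + 1))ᵀ * (1 - t • c)ᵀ) * (Mᵀ * J * M) * ((1 - t • c) * (t • (M + 1))) := by
        rw [h3, hA'A, one_mul, mul_one]
    _ = (t • (M + 1))ᵀ * ((1 - t • c)ᵀ * (Mᵀ * J * M) * (1 - t • c)) * (t • (M + 1)) := by
        simp only [Matrix.mul_assoc]
    _ = (t • (M + 1))ᵀ * ((1 - t • c)ᵀ * J * (1 - t • c)) * (t • (M + 1)) := by rw [key]
    _ = ((t • (M + 1))ᵀ * (1 - t • c)ᵀ) * J * ((1 - t • c) * (t • (M + 1))) := by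
        simp only [Matrix.mul_assoc]
    _ = J := by rw [h3, hA'A, one_mul, mul_one]

end Stmt4Aux

/-- for fixed reals `Δt, ΔW`, the map `(q_k,p_k) ↦ (q_{k+1},p_{k+1})`
implicitly defined by the stochastic midpoint scheme is symplectic wherever it is
well defined and differentiable: its Jacobian `M` satisfies `Mᵀ J M = J`.  The
partial gradients of the `C²` Hamiltonians `H, h` are given by `Hq, Hp, hq, hp`. -/
theorem stmt4 (N : ℕ) (Δt ΔW : ℝ)
    (H h : (Fin N → ℝ) × (Fin N → ℝ) → ℝ)
    (hHC2 : ContDiff ℝ 2 H) (hhC2 : ContDiff ℝ 2 h)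
    (Hq Hp hq hp : (Fin N → ℝ) × (Fin N → ℝ) → (Fin N → ℝ))
    (hHq : ∀ z k, Hq z k = fderiv ℝ H z (Pi.single k 1, 0))
    (hHp : ∀ z k, Hp z k = fderiv ℝ H z (0, Pi.single k 1))
    (hhq : ∀ z k, hq z k = fderiv ℝ h z (Pi.single k 1, 0))
    (hhp : ∀ z k, hp z k = fderiv ℝ h z (0, Pi.single k 1))
    (U : Set ((Fin N → ℝ) × (Fin N → ℝ))) (hU : IsOpen U)
    (F : (Fin N → ℝ) × (Fin N → ℝ) → (Fin N → ℝ) × (Fin N → ℝ))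
    (hF : ContDiffOn ℝ 1 F U)
    -- the implicit midpoint equations, with `Q = (q_k + q_{k+1})/2`,
    -- `P = (p_k + p_{k+1})/2`:
    (heq : ∀ x ∈ U,
      (F x).1 = x.1 + Δt • Hp ((x.1 + (F x).1) / 2, (x.2 + (F x).2) / 2)
                    + ΔW • hp ((x.1 + (F x).1) / 2, (x.2 + (F x).2) / 2) ∧
      (F x).2 = x.2 - Δt • Hq ((x.1 + (F x).1) / 2, (x.2 + (F x).2) / 2)
                    - ΔW • hq ((x.1 + (F x).1) / 2, (x.2 + (F x).2) / 2)) :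
    ∀ x ∈ U, (jacobian4 N F x)ᵀ * sympJ4 N * jacobian4 N F x = sympJ4 N := by
  intro x hx
  classical
  have hH1 : Differentiable ℝ H := hHC2.differentiable two_ne_zero
  have hh1 : Differentiable ℝ h := hhC2.differentiable two_ne_zero
  set K : (Fin N → ℝ) × (Fin N → ℝ) → ℝ := fun z => Δt • H z + ΔW • h z with hKdef
  have hK : ContDiff ℝ 2 K := (hHC2.const_smul Δt).add (hhC2.const_smul ΔW)
  have hK1 : Differentiable ℝ K := hK.differentiable two_ne_zero
  have hKd : ∀ z, fderiv ℝ K z = Δt • fderiv ℝ H z + ΔW • fderiv ℝ h z := by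
    intro z
    rw [hKdef]
    rw [fderiv_fun_add (f := fun y => Δt • H y) (g := fun y => ΔW • h y) ((hH1 z).const_smul Δt) ((hh1 z).const_smul ΔW),
        fderiv_fun_const_smul (hH1 z) Δt, fderiv_fun_const_smul (hh1 z) ΔW]
  have hKd1 : ContDiff ℝ 1 (fderiv ℝ K) := hK.fderiv_right (le_refl 2)
  -- the map `F` is differentiable at `x`
  have hFx : DifferentiableAt ℝ F x :=
    ((hF.differentiableOn one_ne_zero) x hx).differentiableAt (hU.mem_nhds hx)
  set D := fderiv ℝ F x with hDdef
  have hD : HasFDerivAt F D x := hFx.hasFDerivAt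
  -- the midpoint map `m`
  set m : (Fin N → ℝ) × (Fin N → ℝ) → (Fin N → ℝ) × (Fin N → ℝ) :=
    fun y => (2⁻¹ : ℝ) • (y + F y) with hmdef
  have hmeq : ∀ y, (((y.1 + (F y).1) / 2, (y.2 + (F y).2) / 2) :
      (Fin N → ℝ) × (Fin N → ℝ)) = m y := by
    intro y
    refine Prod.ext ?_ ?_
    · funext k
      simp [hmdef, div_eq_inv_mul, mul_add]
    · funext k
      simp [hmdef, div_eq_inv_mul, mul_add]
  set mder := ((2⁻¹ : ℝ) • (ContinuousLinearMap.id ℝ ((Fin N → ℝ) × (Fin N → ℝ)) + D))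
    with hmderdef
  have hm : HasFDerivAt m mder x := ((hasFDerivAt_id x).add hD).const_smul (2⁻¹ : ℝ)
  set z₀ := m x with hz₀def
  set K2 := fderiv ℝ (fderiv ℝ K) z₀ with hK2def
  have hK'' : HasFDerivAt (fderiv ℝ K) K2 z₀ :=
    ((hKd1.differentiable one_ne_zero) z₀).hasFDerivAt
  have hsym : ∀ v w, K2 v w = K2 w v :=
    second_derivative_symmetric (fun y => (hK1 y).hasFDerivAt) hK''
  -- derivative of the evaluation of `fderiv K` at a fixed vector
  have hGu : ∀ u : (Fin N → ℝ) × (Fin N → ℝ), HasFDerivAt (fun z => fderiv ℝ K z u)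
      ((ContinuousLinearMap.apply ℝ ℝ u).comp K2) z₀ := by
    intro u
    have := (ContinuousLinearMap.apply ℝ ℝ u).hasFDerivAt.comp z₀ hK''
    exact this
  set Gp : (Fin N → ℝ) × (Fin N → ℝ) → (Fin N → ℝ) :=
    fun z k => fderiv ℝ K z (stdBasis4 N (Sum.inr k)) with hGpdef
  set Gq : (Fin N → ℝ) × (Fin N → ℝ) → (Fin N → ℝ) :=
    fun z k => fderiv ℝ K z (stdBasis4 N (Sum.inl k)) with hGqdef
  set Lp := ContinuousLinearMap.pi
    (fun k : Fin N => (ContinuousLinearMap.apply ℝ ℝ (stdBasis4 N (Sum.inr k))).comp K2)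
    with hLpdef
  set Lq := ContinuousLinearMap.pi
    (fun k : Fin N => (ContinuousLinearMap.apply ℝ ℝ (stdBasis4 N (Sum.inl k))).comp K2)
    with hLqdef
  have hGp : HasFDerivAt Gp Lp z₀ := hasFDerivAt_pi.2 fun k => hGu _
  have hGq : HasFDerivAt Gq Lq z₀ := hasFDerivAt_pi.2 fun k => hGu _
  -- identification with the given partial gradients
  have hcomb_p : ∀ z, Δt • Hp z + ΔW • hp z = Gp z := by
    intro z; funext k
    simp [hGpdef, hKd z, hHp, hhp, stdBasis4]
  have hcomb_q : ∀ z, Δt • Hq z + ΔW • hq z = Gq z := by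
    intro z; funext k
    simp [hGqdef, hKd z, hHq, hhq, stdBasis4]
  -- the explicit form `G` of `F` near `x` and its derivative
  set G : (Fin N → ℝ) × (Fin N → ℝ) → (Fin N → ℝ) × (Fin N → ℝ) :=
    fun y => (y.1 + Gp (m y), y.2 - Gq (m y)) with hGdef
  have hFG : ∀ y ∈ U, F y = G y := by
    intro y hy
    obtain ⟨h1, h2⟩ := heq y hy
    rw [hmeq y] at h1 h2
    refine Prod.ext ?_ ?_
    · rw [h1, hGdef]; dsimp only; rw [add_assoc, hcomb_p]
    · rw [h2, hGdef]; dsimp only; rw [sub_sub, hcomb_q]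
  set LG := ((ContinuousLinearMap.fst ℝ (Fin N → ℝ) (Fin N → ℝ)) + Lp.comp mder).prod
      ((ContinuousLinearMap.snd ℝ (Fin N → ℝ) (Fin N → ℝ)) - Lq.comp mder) with hLGdef
  have hG : HasFDerivAt G LG x := by
    refine HasFDerivAt.prodMk ?_ ?_
    · exact (hasFDerivAt_fst).add (hGp.comp x hm : HasFDerivAt (Gp ∘ m) (Lp.comp mder) x)
    · exact (hasFDerivAt_snd).sub (hGq.comp x hm : HasFDerivAt (Gq ∘ m) (Lq.comp mder) x)
  have hFG' : F =ᶠ[nhds x] G := Filter.eventuallyEq_of_mem (hU.mem_nhds hx) hFG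
  have hDG : HasFDerivAt F LG x := hG.congr_of_eventuallyEq hFG'
  have hDeq : D = LG := hD.unique hDG
  -- pointwise formula for the derivative of `F` at `x`
  have hDapp : ∀ v, D v = (v.1 + Lp (mder v), v.2 - Lq (mder v)) := by
    intro v
    rw [hDeq, hLGdef]
    simp
  have hLpapp : ∀ u k, Lp u k = K2 u (stdBasis4 N (Sum.inr k)) := by
    intro u k; simp [hLpdef]
  have hLqapp : ∀ u k, Lq u k = K2 u (stdBasis4 N (Sum.inl k)) := by
    intro u k; simp [hLqdef]
  -- matrix setup
  set M := jacobian4 N F x with hMdef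
  set S : Matrix (Fin N ⊕ Fin N) (Fin N ⊕ Fin N) ℝ :=
    Matrix.of fun i j => K2 (stdBasis4 N i) (stdBasis4 N j) with hSdef
  have hMc : ∀ i j, M i j = Stmt4Aux.coord i (D (stdBasis4 N j)) := by
    intro i j; cases i <;> rfl
  have hw : ∀ j, stdBasis4 N j + D (stdBasis4 N j)
      = ∑ l, ((1 + M) l j) • stdBasis4 N l := by
    intro j
    conv_lhs => rw [← Stmt4Aux.sum_coord_smul (stdBasis4 N j + D (stdBasis4 N j))]
    refine Finset.sum_congr rfl fun l _ => ?_
    rw [Stmt4Aux.coord_add, Stmt4Aux.coord_std, ← hMc, Matrix.add_apply]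
  have hK2w : ∀ j u, K2 (mder (stdBasis4 N j)) u
      = 2⁻¹ * ∑ l, (1 + M) l j * K2 (stdBasis4 N l) u := by
    intro j u
    have h1 : mder (stdBasis4 N j)
        = (2⁻¹ : ℝ) • (stdBasis4 N j + D (stdBasis4 N j)) := by
      rw [hmderdef]
      simp
    rw [h1, hw j, _root_.map_smul, map_sum, ContinuousLinearMap.smul_apply,
      ContinuousLinearMap.sum_apply, smul_eq_mul]
    congr 1
    refine Finset.sum_congr rfl fun l _ => ?_
    rw [_root_.map_smul, ContinuousLinearMap.smul_apply, smul_eq_mul]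
  -- entries of `J * S`
  have hJS₁ : ∀ (k : Fin N) l, (sympJ4 N * S) (Sum.inl k) l = S (Sum.inr k) l := by
    intro k l
    rw [Matrix.mul_apply, Fintype.sum_sum_type]
    simp [sympJ4, Matrix.one_apply]
  have hJS₂ : ∀ (k : Fin N) l, (sympJ4 N * S) (Sum.inr k) l = -(S (Sum.inl k) l) := by
    intro k l
    rw [Matrix.mul_apply, Fintype.sum_sum_type]
    simp [sympJ4, Matrix.one_apply]
  -- the Cayley relation for `M`
  have hMeq : M = 1 + (2⁻¹ : ℝ) • (sympJ4 N * S * (1 + M)) := by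
    ext i j
    rw [Matrix.add_apply, Matrix.smul_apply, smul_eq_mul, Matrix.mul_apply]
    cases i with
    | inl k =>
      have e1 : M (Sum.inl k) j = (stdBasis4 N j).1 k
          + K2 (mder (stdBasis4 N j)) (stdBasis4 N (Sum.inr k)) := by
        rw [hMc]
        show (D (stdBasis4 N j)).1 k = _
        rw [hDapp (stdBasis4 N j)]
        rw [show ((stdBasis4 N j).1 + Lp (mder (stdBasis4 N j)), (stdBasis4 N j).2
          - Lq (mder (stdBasis4 N j))).1 = (stdBasis4 N j).1 + Lp (mder (stdBasis4 N j)) from rfl]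
        rw [Pi.add_apply, hLpapp]
      rw [e1, hK2w]
      have e2 : (stdBasis4 N j).1 k = (1 : Matrix (Fin N ⊕ Fin N) (Fin N ⊕ Fin N) ℝ)
          (Sum.inl k) j := Stmt4Aux.coord_std (Sum.inl k) j
      rw [e2]
      congr 1
      congr 1
      refine Finset.sum_congr rfl fun l _ => ?_
      rw [hJS₁, mul_comm]
      congr 1
      exact hsym _ _
    | inr k =>
      have e1 : M (Sum.inr k) j = (stdBasis4 N j).2 k
          - K2 (mder (stdBasis4 N j)) (stdBasis4 N (Sum.inl k)) := by
        rw [hMc]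
        show (D (stdBasis4 N j)).2 k = _
        rw [hDapp (stdBasis4 N j)]
        rw [show ((stdBasis4 N j).1 + Lp (mder (stdBasis4 N j)), (stdBasis4 N j).2
          - Lq (mder (stdBasis4 N j))).2 = (stdBasis4 N j).2 - Lq (mder (stdBasis4 N j)) from rfl]
        rw [Pi.sub_apply, hLqapp]
      rw [e1, hK2w]
      have e2 : (stdBasis4 N j).2 k = (1 : Matrix (Fin N ⊕ Fin N) (Fin N ⊕ Fin N) ℝ)
          (Sum.inr k) j := Stmt4Aux.coord_std (Sum.inr k) j
      rw [e2]
      have e3 : ∀ l, (sympJ4 N * S) (Sum.inr k) l * (1 + M) l j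
          = -((1 + M) l j * K2 (stdBasis4 N l) (stdBasis4 N (Sum.inl k))) := by
        intro l
        rw [hJS₂, neg_mul, mul_comm]
        congr 2
        exact hsym _ _
      rw [Finset.sum_congr rfl fun l _ => e3 l, Finset.sum_neg_distrib, mul_neg,
        ← sub_eq_add_neg]
  -- symmetry of `S`
  have hST : Sᵀ = S := by
    ext i j
    rw [Matrix.transpose_apply]
    exact hsym _ _
  exact Stmt4Aux.symplectic_algebra (sympJ4 N) S M (Stmt4Aux.sympJ4_transpose N)
    (Stmt4Aux.sympJ4_sq N) hST hMeq
end

section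
/- For the symplectic Euler scheme q_{k+1} = q_k + ∂H/∂p(q_{k+1}, p_k)Δt, p_{k+1} = p_k − ∂H/∂q(q_{k+1}, p_k)Δt − ∂h/∂q(q_{k+1})ΔW, with fixed real Δt, ΔW, the implicitly defined map (q_k,p_k) ↦ (q_{k+1},p_{k+1}) is symplectic on ℝ² (N=1): the determinant of its Jacobian equals 1 wherever the map is well-defined and C¹. -/
open Matrix

/-- for `N = 1`, the symplectic Euler scheme
`q₁ = q₀ + ∂H/∂p(q₁,p₀)Δt`, `p₁ = p₀ − ∂H/∂q(q₁,p₀)Δt − h'(q₁)ΔW`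
defines (via the implicit function theorem) a map whose Jacobian determinant
equals `1` wherever the map is well defined and `C¹`; for `N = 1` this is
equivalent to symplecticity. -/
theorem stmt8 (Δt ΔW : ℝ)
    (H : ℝ × ℝ → ℝ) (hH : ContDiff ℝ 2 H)
    (h : ℝ → ℝ) (hh : ContDiff ℝ 2 h)
    (Hq Hp : ℝ × ℝ → ℝ)
    (hHq : ∀ z, Hq z = fderiv ℝ H z (1, 0))
    (hHp : ∀ z, Hp z = fderiv ℝ H z (0, 1))
    (U : Set (ℝ × ℝ)) (hU : IsOpen U)
    (F : ℝ × ℝ → ℝ × ℝ) (hF : ContDiffOn ℝ 1 F U)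
    (heq : ∀ x ∈ U,
      (F x).1 = x.1 + Hp ((F x).1, x.2) * Δt ∧
      (F x).2 = x.2 - Hq ((F x).1, x.2) * Δt - deriv h (F x).1 * ΔW)
    -- the implicit-function-theorem nondegeneracy condition
    (hIFT : ∀ x ∈ U, 1 - Δt * deriv (fun a => Hp (a, x.2)) ((F x).1) ≠ 0) :
    ∀ x ∈ U,
      Matrix.det (Matrix.of fun i j : Fin 2 =>
        ![![(fderiv ℝ F x (1, 0)).1, (fderiv ℝ F x (0, 1)).1],
          ![(fderiv ℝ F x (1, 0)).2, (fderiv ℝ F x (0, 1)).2]] i j) = 1 := by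
  intro x hx
  -- basic smoothness facts
  have hH1 : ContDiff ℝ 1 (fderiv ℝ H) := hH.fderiv_right (by norm_num)
  have hh1 : ContDiff ℝ 1 (fderiv ℝ h) := hh.fderiv_right (by norm_num)
  -- F is differentiable at x
  have hFd : DifferentiableAt ℝ F x :=
    (hF.differentiableOn one_ne_zero).differentiableAt (hU.mem_nhds hx)
  set Dx : ℝ × ℝ →L[ℝ] ℝ × ℝ := fderiv ℝ F x with hDx
  have hFdd : HasFDerivAt F Dx x := hFd.hasFDerivAt
  -- z : the point where derivatives of H are evaluated
  set z : ℝ × ℝ := ((F x).1, x.2) with hz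
  -- second derivative of H at z
  set A : ℝ × ℝ →L[ℝ] (ℝ × ℝ) →L[ℝ] ℝ := fderiv ℝ (fderiv ℝ H) z with hA
  have hA' : HasFDerivAt (fderiv ℝ H) A z :=
    (hH1.differentiable one_ne_zero z).hasFDerivAt
  -- symmetry of the second derivative
  have hsymm : ∀ v w, A v w = A w v := by
    intro v w
    exact second_derivative_symmetric
      (fun y => (hH.differentiable (by norm_num) y).hasFDerivAt) hA' v w
  -- derivative of Hp and Hq at z
  have hHpD : HasFDerivAt Hp
      ((ContinuousLinearMap.apply ℝ ℝ ((0:ℝ),(1:ℝ))).comp A) z := by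
    have := ((ContinuousLinearMap.apply ℝ ℝ ((0:ℝ),(1:ℝ))).hasFDerivAt.comp z hA')
    exact this.congr_of_eventuallyEq
      (Filter.Eventually.of_forall fun y => by simp [hHp y, Function.comp])
  have hHqD : HasFDerivAt Hq
      ((ContinuousLinearMap.apply ℝ ℝ ((1:ℝ),(0:ℝ))).comp A) z := by
    have := ((ContinuousLinearMap.apply ℝ ℝ ((1:ℝ),(0:ℝ))).hasFDerivAt.comp z hA')
    exact this.congr_of_eventuallyEq
      (Filter.Eventually.of_forall fun y => by simp [hHq y, Function.comp])
  -- derivative of deriv h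
  have hhd : HasDerivAt (deriv h) (deriv (deriv h) ((F x).1)) ((F x).1) := by
    have : DifferentiableAt ℝ (deriv h) ((F x).1) := by
      have : ContDiff ℝ 1 (deriv h) := by
        have : deriv h = fun t => fderiv ℝ h t 1 := by
          ext t; rw [← derivWithin_univ, ← fderivWithin_univ]; rfl
        rw [this]
        exact (ContinuousLinearMap.apply ℝ ℝ (1:ℝ)).contDiff.comp hh1
      exact (this.differentiable one_ne_zero) _
    exact this.hasDerivAt
  -- inner map y ↦ ((F y).1, y.2)
  set L : ℝ × ℝ →L[ℝ] ℝ × ℝ :=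
    ((ContinuousLinearMap.fst ℝ ℝ ℝ).comp Dx).prod (ContinuousLinearMap.snd ℝ ℝ ℝ) with hL
  have hGd : HasFDerivAt (fun y : ℝ × ℝ => ((F y).1, y.2)) L x := by
    exact (HasFDerivAt.prodMk ((ContinuousLinearMap.fst ℝ ℝ ℝ).hasFDerivAt.comp x hFdd)
      (ContinuousLinearMap.snd ℝ ℝ ℝ).hasFDerivAt)
  -- derivative of y ↦ Hp((F y).1, y.2) and y ↦ Hq((F y).1, y.2) at x
  have hHpc : HasFDerivAt (fun y : ℝ × ℝ => Hp ((F y).1, y.2))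
      (((ContinuousLinearMap.apply ℝ ℝ ((0:ℝ),(1:ℝ))).comp A).comp L) x :=
    hHpD.comp x hGd
  have hHqc : HasFDerivAt (fun y : ℝ × ℝ => Hq ((F y).1, y.2))
      (((ContinuousLinearMap.apply ℝ ℝ ((1:ℝ),(0:ℝ))).comp A).comp L) x :=
    hHqD.comp x hGd
  -- derivative of y ↦ deriv h ((F y).1)
  have hhc : HasFDerivAt (fun y : ℝ × ℝ => deriv h ((F y).1))
      ((deriv (deriv h) ((F x).1)) •
        ((ContinuousLinearMap.fst ℝ ℝ ℝ).comp Dx)) x :=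
    by have := hhd.comp_hasFDerivAt x ((ContinuousLinearMap.fst ℝ ℝ ℝ).hasFDerivAt.comp x hFdd); exact this
  -- derivative of the right-hand sides
  have hg1 : HasFDerivAt (fun y : ℝ × ℝ => y.1 + Hp ((F y).1, y.2) * Δt)
      ((ContinuousLinearMap.fst ℝ ℝ ℝ) +
        Δt • (((ContinuousLinearMap.apply ℝ ℝ ((0:ℝ),(1:ℝ))).comp A).comp L)) x := by
    have h1 := (ContinuousLinearMap.fst ℝ ℝ ℝ).hasFDerivAt.add (hHpc.const_mul Δt)
    have heqf : (fun y : ℝ × ℝ => (ContinuousLinearMap.fst ℝ ℝ ℝ) y + Δt * Hp ((F y).1, y.2))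
        = fun y : ℝ × ℝ => y.1 + Hp ((F y).1, y.2) * Δt := by
      funext y; simp [mul_comm]
    exact h1.congr_of_eventuallyEq (Filter.Eventually.of_forall fun y => (congrFun heqf y).symm)
  have hg2 : HasFDerivAt
      (fun y : ℝ × ℝ => y.2 - Hq ((F y).1, y.2) * Δt - deriv h ((F y).1) * ΔW)
      ((ContinuousLinearMap.snd ℝ ℝ ℝ) -
        Δt • (((ContinuousLinearMap.apply ℝ ℝ ((1:ℝ),(0:ℝ))).comp A).comp L) -
        ΔW • ((deriv (deriv h) ((F x).1)) •
          ((ContinuousLinearMap.fst ℝ ℝ ℝ).comp Dx))) x := by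
    have h1 := ((ContinuousLinearMap.snd ℝ ℝ ℝ).hasFDerivAt.sub
      (hHqc.const_mul Δt)).sub (hhc.const_mul ΔW)
    have heqf : (fun y : ℝ × ℝ =>
          (ContinuousLinearMap.snd ℝ ℝ ℝ) y - Δt * Hq ((F y).1, y.2) - ΔW * deriv h ((F y).1))
        = fun y : ℝ × ℝ => y.2 - Hq ((F y).1, y.2) * Δt - deriv h ((F y).1) * ΔW := by
      funext y; simp [mul_comm]
    exact h1.congr_of_eventuallyEq (Filter.Eventually.of_forall fun y => (congrFun heqf y).symm)
  -- the components of F agree with the RHS on the open set U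
  have hQ : HasFDerivAt (fun y : ℝ × ℝ => (F y).1)
      ((ContinuousLinearMap.fst ℝ ℝ ℝ) +
        Δt • (((ContinuousLinearMap.apply ℝ ℝ ((0:ℝ),(1:ℝ))).comp A).comp L)) x := by
    apply hg1.congr_of_eventuallyEq
    filter_upwards [hU.mem_nhds hx] with y hy
    exact (heq y hy).1
  have hP : HasFDerivAt (fun y : ℝ × ℝ => (F y).2)
      ((ContinuousLinearMap.snd ℝ ℝ ℝ) -
        Δt • (((ContinuousLinearMap.apply ℝ ℝ ((1:ℝ),(0:ℝ))).comp A).comp L) -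
        ΔW • ((deriv (deriv h) ((F x).1)) •
          ((ContinuousLinearMap.fst ℝ ℝ ℝ).comp Dx))) x := by
    apply hg2.congr_of_eventuallyEq
    filter_upwards [hU.mem_nhds hx] with y hy
    exact (heq y hy).2
  -- but also F components have derivative fst ∘ Dx, snd ∘ Dx
  have hQ' : HasFDerivAt (fun y : ℝ × ℝ => (F y).1)
      ((ContinuousLinearMap.fst ℝ ℝ ℝ).comp Dx) x :=
    (ContinuousLinearMap.fst ℝ ℝ ℝ).hasFDerivAt.comp x hFdd
  have hP' : HasFDerivAt (fun y : ℝ × ℝ => (F y).2)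
      ((ContinuousLinearMap.snd ℝ ℝ ℝ).comp Dx) x :=
    (ContinuousLinearMap.snd ℝ ℝ ℝ).hasFDerivAt.comp x hFdd
  have e1 := hQ'.unique hQ
  have e2 := hP'.unique hP
  -- scalar abbreviations
  set a1 := (Dx ((1:ℝ),(0:ℝ))).1 with ha1
  set a2 := (Dx ((1:ℝ),(0:ℝ))).2 with ha2
  set b1 := (Dx ((0:ℝ),(1:ℝ))).1 with hb1
  set b2 := (Dx ((0:ℝ),(1:ℝ))).2 with hb2
  set α := A ((1:ℝ),(0:ℝ)) ((0:ℝ),(1:ℝ)) with hα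
  set β := A ((0:ℝ),(1:ℝ)) ((0:ℝ),(1:ℝ)) with hβ
  set γ := A ((1:ℝ),(0:ℝ)) ((1:ℝ),(0:ℝ)) with hγ
  set δ := A ((0:ℝ),(1:ℝ)) ((1:ℝ),(0:ℝ)) with hδ
  set c := deriv (deriv h) ((F x).1) with hc
  have eA1 : a1 = 1 + Δt * (A (a1, 0) ((0:ℝ),(1:ℝ))) := by
    have := congrFun (congrArg DFunLike.coe e1) ((1:ℝ),(0:ℝ))
    simpa [L, mul_comm] using this
  have eB1 : b1 = Δt * (A (b1, 1) ((0:ℝ),(1:ℝ))) := by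
    have := congrFun (congrArg DFunLike.coe e1) ((0:ℝ),(1:ℝ))
    simpa [L, mul_comm] using this
  have eA2 : a2 = - (Δt * (A (a1, 0) ((1:ℝ),(0:ℝ)))) - ΔW * (c * a1) := by
    have := congrFun (congrArg DFunLike.coe e2) ((1:ℝ),(0:ℝ))
    simpa [L, mul_comm, sub_eq_add_neg] using this
  have eB2 : b2 = 1 - Δt * (A (b1, 1) ((1:ℝ),(0:ℝ))) - ΔW * (c * b1) := by
    have := congrFun (congrArg DFunLike.coe e2) ((0:ℝ),(1:ℝ))
    simpa [L, mul_comm, sub_eq_add_neg] using this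
  -- expand bilinearity: (u, v) = u•(1,0) + v•(0,1)
  have hexp : ∀ u v : ℝ, ((u, v) : ℝ × ℝ) = u • ((1:ℝ),(0:ℝ)) + v • ((0:ℝ),(1:ℝ)) := by
    intro u v; simp [Prod.ext_iff]
  have hlin : ∀ (u v : ℝ) (w : ℝ × ℝ),
      A (u, v) w = u * A ((1:ℝ),(0:ℝ)) w + v * A ((0:ℝ),(1:ℝ)) w := by
    intro u v w
    rw [hexp u v, map_add, A.map_smul, A.map_smul]
    simp [smul_eq_mul]
  have eA1' : a1 = 1 + Δt * (a1 * α) := by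
    rw [hlin] at eA1; simp only [← hα] at eA1; linear_combination eA1
  have eB1' : b1 = Δt * (b1 * α + β) := by
    rw [hlin] at eB1; simp only [← hα, ← hβ] at eB1; linear_combination eB1
  have eA2' : a2 = - (Δt * (a1 * γ)) - ΔW * (c * a1) := by
    rw [hlin] at eA2; simp only [← hγ] at eA2; linear_combination eA2
  have eB2' : b2 = 1 - Δt * (b1 * γ + δ) - ΔW * (c * b1) := by
    rw [hlin] at eB2; simp only [← hγ, ← hδ] at eB2; linear_combination eB2
  have hαδ : δ = α := hsymm _ _
  -- compute the determinant
  rw [Matrix.det_fin_two]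
  simp only [Matrix.of_apply, Matrix.cons_val', Matrix.cons_val_zero, Matrix.cons_val_one,
    Matrix.head_cons, Matrix.head_fin_const, Matrix.empty_val', Matrix.cons_val_fin_one]
  show a1 * b2 - b1 * a2 = 1
  rw [hαδ] at eB2'
  linear_combination a1 * eB2' - b1 * eA2' + eA1'
end
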